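/- Let P = (p_{i,j}) be an irreducible stochastic matrix on a finite index set I, fix j ∈ I, and let t_i ≥ 0 for all i. Then the discrete Poisson problem T_i = t_i + Σ_{k∈I} p_{i,k} T_k for i ≠ j, with boundary condition T_j = 0, has at most one solution (T_i)_{i∈I}. -/

import Mathlib

lemma stmt_2_aux {I : Type*} [Fintype I] [DecidableEq I]
    (P : Matrix I I ℝ)
    (hPnonneg : ∀ i k, 0 ≤ P i k)
    (hProw : ∀ i, ∑ k, P i k = 1)
    (hirr : ∀ i k : I, ∃ n : ℕ, 0 < (P ^ n) i k)
    (j : I) (D : I → ℝ)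
    (hDj : D j = 0)
    (hharm : ∀ i, i ≠ j → D i = ∑ k, P i k * D k) :
    ∀ i, D i ≤ 0 := by
  by_contra h
  push_neg at h
  obtain ⟨i0, hi0⟩ := h
  obtain ⟨m, -, hm⟩ := Finset.exists_max_image Finset.univ D ⟨i0, Finset.mem_univ i0⟩
  set M := D m with hM
  have hMpos : 0 < M := lt_of_lt_of_le hi0 (hm i0 (Finset.mem_univ i0))
  have key : ∀ n i, D i = M → 0 < (P ^ n) i j → False := by
    intro n
    induction n with
    | zero =>
      intro i hiM hp
      simp only [pow_zero, Matrix.one_apply] at hp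
      by_cases hij : i = j
      · rw [hij, hDj] at hiM; linarith
      · simp [hij] at hp
    | succ n ih =>
      intro i hiM hp
      have hij : i ≠ j := by
        intro h; rw [h, hDj] at hiM; linarith
      rw [pow_succ', Matrix.mul_apply] at hp
      have hex : ∃ k, 0 < P i k * (P ^ n) k j := by
        by_contra hc
        push_neg at hc
        have : ∑ k, P i k * (P ^ n) k j ≤ 0 := Finset.sum_nonpos (fun k _ => hc k)
        linarith
      obtain ⟨k, hk⟩ := hex
      have hPn : 0 ≤ (P ^ n) k j := by
        have : ∀ n (a b : I), 0 ≤ (P ^ n) a b := by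
          intro n
          induction n with
          | zero => intro a b; simp [Matrix.one_apply]; split <;> norm_num
          | succ n ih =>
            intro a b
            rw [pow_succ, Matrix.mul_apply]
            exact Finset.sum_nonneg fun c _ => mul_nonneg (ih a c) (hPnonneg c b)
        exact this n k j
      have hPik : 0 < P i k := by
        rcases lt_or_eq_of_le (hPnonneg i k) with h' | h'
        · exact h'
        · rw [← h'] at hk; simp at hk
      have hPnkj : 0 < (P ^ n) k j := by
        rcases lt_or_eq_of_le hPn with h' | h'
        · exact h'
        · rw [← h'] at hk; simp at hk
      have hsum0 : ∑ k, P i k * (M - D k) = 0 := by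
        have h1 := hharm i hij
        have h2 : ∑ k, P i k * (M - D k)
            = M * (∑ k, P i k) - ∑ k, P i k * D k := by
          rw [Finset.mul_sum, ← Finset.sum_sub_distrib]
          congr 1; ext k; ring
        rw [h2, hProw, ← h1, hiM]; ring
      have hDk : D k = M := by
        have hterm := (Finset.sum_eq_zero_iff_of_nonneg
          (fun k _ => mul_nonneg (hPnonneg i k)
            (by have := hm k (Finset.mem_univ k); linarith : 0 ≤ M - D k))).mp hsum0
          k (Finset.mem_univ k)
        rcases mul_eq_zero.mp hterm with h' | h'
        · linarith
        · linarith
      exact ih k hDk hPnkj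
  obtain ⟨n, hn⟩ := hirr m j
  exact key n m rfl hn

/-- For an irreducible stochastic matrix `P` on a finite index set `I`,
a fixed target `j` and nonnegative `t`, the discrete Poisson problem
`T i = t i + ∑ k, P i k * T k` for `i ≠ j`, with `T j = 0`, has at most one solution. -/
theorem stmt_2 {I : Type*} [Fintype I] [DecidableEq I]
    (P : Matrix I I ℝ)
    (hPnonneg : ∀ i k, 0 ≤ P i k)
    (hProw : ∀ i, ∑ k, P i k = 1)
    (hirr : ∀ i k : I, ∃ n : ℕ, 0 < (P ^ n) i k)
    (j : I) (t : I → ℝ) (ht : ∀ i, 0 ≤ t i)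
    (T T' : I → ℝ)
    (hTj : T j = 0) (hT'j : T' j = 0)
    (hT : ∀ i, i ≠ j → T i = t i + ∑ k, P i k * T k)
    (hT' : ∀ i, i ≠ j → T' i = t i + ∑ k, P i k * T' k) :
    T = T' := by
  have hharm : ∀ (c : ℝ), ∀ i, i ≠ j →
      c * (T i - T' i) = ∑ k, P i k * (c * (T k - T' k)) := by
    intro c i hi
    rw [hT i hi, hT' i hi]
    have : ∑ k, P i k * (c * (T k - T' k))
        = c * (∑ k, P i k * T k - ∑ k, P i k * T' k) := by
      rw [← Finset.sum_sub_distrib, Finset.mul_sum]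
      congr 1; ext k; ring
    rw [this]; ring
  have h1 := stmt_2_aux P hPnonneg hProw hirr j (fun i => T i - T' i)
    (by simp [hTj, hT'j]) (by
      intro i hi
      have := hharm 1 i hi
      simpa using this)
  have h2 := stmt_2_aux P hPnonneg hProw hirr j (fun i => T' i - T i)
    (by simp [hTj, hT'j]) (by
      intro i hi
      have := hharm (-1) i hi
      have h' : T' i - T i = ∑ k, P i k * (T' k - T k) := by
        rw [show T' i - T i = -1 * (T i - T' i) by ring, this]
        congr 1; ext k; ring
      exact h')
  funext i
  have := h1 i
  have := h2 i
  linarith [h1 i, h2 i]
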